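/- arXiv:2605.05592 — 2 statements merged into one kernel-verified Lean document; each statement's English description precedes it below -/
import Mathlib

section
/- If the signed voting signature ω_Π is a nonnegative measure on [0,1/4], then the voting curve n ↦ V_n(Π) is nondecreasing and discretely concave; if −ω_Π is nonnegative, it is nonincreasing and discretely convex. -/
open MeasureTheory

/-- Odd-budget majority accuracy: `P n q = ℙ(Bin(2n+1,q) ≥ n+1)`. -/
noncomputable def majP (n : ℕ) (q : ℝ) : ℝ :=
  ∑ j ∈ Finset.Icc (n+1) (2*n+1), ((2*n+1).choose j : ℝ) * q^j * (1-q)^(2*n+1-j)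

/-- Population voting curve. -/
noncomputable def voteV (μ : Measure ℝ) (n : ℕ) : ℝ := ∫ q, majP n q ∂μ

lemma aux_fin (μ : Measure ℝ) [IsFiniteMeasure μ] (g : ℝ → ℝ) (hg : ∀ q ∈ Set.Icc (0:ℝ) 1, g q ≤ 1) :
    IsFiniteMeasure ((μ.restrict (Set.Icc 0 1)).withDensity (fun q => ENNReal.ofReal (g q))) := by
  apply isFiniteMeasure_withDensity
  have h : ∫⁻ q, ENNReal.ofReal (g q) ∂(μ.restrict (Set.Icc 0 1)) ≤ ∫⁻ _, 1 ∂(μ.restrict (Set.Icc 0 1)) := by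
    refine setLIntegral_mono' measurableSet_Icc fun q hq => ?_
    simpa using ENNReal.ofReal_le_one.2 (hg q hq)
  refine ne_of_lt (lt_of_le_of_lt h ?_)
  simp [lintegral_one]

/-- Signed voting signature as a signed measure on ℝ (carried on [0,1/4]). -/
noncomputable def signature (μ : Measure ℝ) [IsFiniteMeasure μ] : SignedMeasure ℝ :=
  letI h1 := aux_fin μ (fun q => 2*q-1) (by intro q hq; simp only [Set.mem_Icc] at hq; linarith [hq.2])
  letI h2 := aux_fin μ (fun q => 1-2*q) (by intro q hq; simp only [Set.mem_Icc] at hq; linarith [hq.1])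
  (((μ.restrict (Set.Icc 0 1)).withDensity (fun q => ENNReal.ofReal (2*q-1))).map
      (fun q => q*(1-q))).toSignedMeasure
  - (((μ.restrict (Set.Icc 0 1)).withDensity (fun q => ENNReal.ofReal (1-2*q))).map
      (fun q => q*(1-q))).toSignedMeasure

/-- Integral of a real function against a signed measure, via the Jordan decomposition. -/
noncomputable def sInt {α : Type*} [MeasurableSpace α] (s : SignedMeasure α) (f : α → ℝ) : ℝ :=
  (∫ a, f a ∂s.toJordanDecomposition.posPart) - ∫ a, f a ∂s.toJordanDecomposition.negPart

/-- Limiting majority accuracy. -/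
noncomputable def voteVinf (μ : Measure ℝ) : ℝ :=
  (μ (Set.Ioc (1/2 : ℝ) 1)).toReal + (1/2) * (μ {(1/2 : ℝ)}).toReal

/-- Total-variation norm of the signed voting signature. -/
noncomputable def sigTV (μ : Measure ℝ) [IsFiniteMeasure μ] : ℝ :=
  ((signature μ).totalVariation Set.univ).toReal


open scoped ENNReal

lemma Icc_shift (c a b : ℕ) (g : ℕ → ℝ) :
    ∑ k ∈ Finset.Icc (a+c) (b+c), g k = ∑ i ∈ Finset.Icc a b, g (i+c) := by
  rw [← Finset.map_add_right_Icc, Finset.sum_map]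
  rfl

lemma majP_succ (n : ℕ) (q : ℝ) :
    majP (n+1) q = majP n q + ((2*n+1).choose (n+1) : ℝ) * (2*q-1) * (q*(1-q))^(n+1) := by
  have hM : majP n q = ((2*n+1).choose (n+1) : ℝ) * q^(n+1) * (1-q)^(n) +
      ∑ j ∈ Finset.Icc (n+2) (2*n+1), ((2*n+1).choose j : ℝ) * q^j * (1-q)^(2*n+1-j) := by
    rw [majP]
    have hins : Finset.Icc (n+1) (2*n+1) = insert (n+1) (Finset.Icc (n+2) (2*n+1)) := by
      ext x; simp only [Finset.mem_Icc, Finset.mem_insert]; omega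
    rw [hins, Finset.sum_insert (by simp [Finset.mem_Icc])]
    have h : 2*n+1-(n+1) = n := by omega
    rw [h]
  -- LHS rewrite
  have key : majP (n+1) q =
      ∑ i ∈ Finset.Icc n (2*n+1), ((2*n+3).choose (i+2) : ℝ) * q^(i+2) * (1-q)^(2*n+1-i) := by
    rw [majP]
    have h1 : (n+1)+1 = n+2 := rfl
    have h2 : 2*(n+1)+1 = (2*n+1)+2 := by omega
    have h3 : n + 2 = n + 2 := rfl
    rw [h2]
    rw [Icc_shift 2 n (2*n+1) (fun j => (((2*n+1)+2).choose j : ℝ) * q^j * (1-q)^((2*n+1)+2-j))]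
    refine Finset.sum_congr rfl fun i hi => ?_
    have h4 : (2*n+1)+2-(i+2) = 2*n+1-i := by omega
    have h5 : (2*n+1)+2 = 2*n+3 := by omega
    rw [h4, h5]
  -- Pascal decomposition of each term
  have pascal : ∀ i : ℕ, ((2*n+3).choose (i+2) : ℝ) =
      ((2*n+1).choose i : ℝ) + 2*((2*n+1).choose (i+1) : ℝ) + ((2*n+1).choose (i+2):ℝ) := by
    intro i
    have p1 : (2*n+3).choose (i+2) = (2*n+2).choose (i+1) + (2*n+2).choose (i+2) := Nat.choose_succ_succ' (2*n+2) (i+1)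
    have p2 : (2*n+2).choose (i+1) = (2*n+1).choose i + (2*n+1).choose (i+1) := Nat.choose_succ_succ' (2*n+1) i
    have p3 : (2*n+2).choose (i+2) = (2*n+1).choose (i+1) + (2*n+1).choose (i+2) := Nat.choose_succ_succ' (2*n+1) (i+1)
    have : (2*n+3).choose (i+2) = (2*n+1).choose i + 2*(2*n+1).choose (i+1) + (2*n+1).choose (i+2) := by omega
    rw [this]; push_cast; ring
  have split : majP (n+1) q =
      (∑ i ∈ Finset.Icc n (2*n+1), ((2*n+1).choose i : ℝ) * q^(i+2) * (1-q)^(2*n+1-i))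
      + 2 * (∑ i ∈ Finset.Icc n (2*n+1), ((2*n+1).choose (i+1) : ℝ) * q^(i+2) * (1-q)^(2*n+1-i))
      + (∑ i ∈ Finset.Icc n (2*n+1), ((2*n+1).choose (i+2) : ℝ) * q^(i+2) * (1-q)^(2*n+1-i)) := by
    rw [key, Finset.mul_sum, ← Finset.sum_add_distrib, ← Finset.sum_add_distrib]
    refine Finset.sum_congr rfl fun i _ => ?_
    rw [pascal i]; ring
  have E0 : ∑ i ∈ Finset.Icc n (2*n+1), ((2*n+1).choose i : ℝ) * q^(i+2) * (1-q)^(2*n+1-i)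
      = q^2 * majP n q + ((2*n+1).choose (n+1) : ℝ) * q^(n+2) * (1-q)^(n+1) := by
    have hins : Finset.Icc n (2*n+1) = insert n (Finset.Icc (n+1) (2*n+1)) := by
      ext x; simp only [Finset.mem_Icc, Finset.mem_insert]; omega
    rw [hins, Finset.sum_insert (by simp [Finset.mem_Icc])]
    have h : 2*n+1-n = n+1 := by omega
    have hsym : (2*n+1).choose n = (2*n+1).choose (n+1) := by
      have h2 := Nat.choose_symm (show n+1 ≤ 2*n+1 by omega)
      rw [show 2*n+1-(n+1) = n by omega] at h2
      exact h2
    rw [h, hsym, majP, Finset.mul_sum]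
    rw [Finset.sum_congr rfl (fun i (_ : i ∈ Finset.Icc (n+1) (2*n+1)) =>
      show ((2*n+1).choose i : ℝ) * q^(i+2) * (1-q)^(2*n+1-i)
         = q^2 * (((2*n+1).choose i : ℝ) * q^i * (1-q)^(2*n+1-i)) from by ring)]
    ring
  have E1 : ∑ i ∈ Finset.Icc n (2*n+1), ((2*n+1).choose (i+1) : ℝ) * q^(i+2) * (1-q)^(2*n+1-i)
      = q*(1-q) * majP n q := by
    have step : ∑ k ∈ Finset.Icc (n+1) (2*n+2), ((2*n+1).choose k : ℝ) * q^(k+1) * (1-q)^(2*n+2-k)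
        = ∑ i ∈ Finset.Icc n (2*n+1), ((2*n+1).choose (i+1) : ℝ) * q^(i+2) * (1-q)^(2*n+1-i) := by
      rw [Icc_shift 1 n (2*n+1) (fun k => ((2*n+1).choose k : ℝ) * q^(k+1) * (1-q)^(2*n+2-k))]
      refine Finset.sum_congr rfl fun i _ => ?_
      rw [show 2*n+2-(i+1) = 2*n+1-i by omega]
    rw [← step]
    have hins : Finset.Icc (n+1) (2*n+2) = insert (2*n+2) (Finset.Icc (n+1) (2*n+1)) := by
      ext x; simp only [Finset.mem_Icc, Finset.mem_insert]; omega
    rw [hins, Finset.sum_insert (by simp [Finset.mem_Icc])]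
    rw [Nat.choose_eq_zero_of_lt (by omega : 2*n+1 < 2*n+2)]
    rw [majP, Finset.mul_sum]
    rw [Finset.sum_congr rfl (fun k hk =>
      show ((2*n+1).choose k : ℝ) * q^(k+1) * (1-q)^(2*n+2-k)
         = q*(1-q) * (((2*n+1).choose k : ℝ) * q^k * (1-q)^(2*n+1-k)) from by
        have hk' : k ≤ 2*n+1 := (Finset.mem_Icc.mp hk).2
        rw [show 2*n+2-k = (2*n+1-k)+1 by omega]; ring)]
    simp
  have E2 : ∑ i ∈ Finset.Icc n (2*n+1), ((2*n+1).choose (i+2) : ℝ) * q^(i+2) * (1-q)^(2*n+1-i)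
      = (1-q)^2 * (∑ j ∈ Finset.Icc (n+2) (2*n+1), ((2*n+1).choose j : ℝ) * q^j * (1-q)^(2*n+1-j)) := by
    have step : ∑ k ∈ Finset.Icc (n+2) (2*n+3), ((2*n+1).choose k : ℝ) * q^k * (1-q)^(2*n+3-k)
        = ∑ i ∈ Finset.Icc n (2*n+1), ((2*n+1).choose (i+2) : ℝ) * q^(i+2) * (1-q)^(2*n+1-i) := by
      rw [Icc_shift 2 n (2*n+1) (fun k => ((2*n+1).choose k : ℝ) * q^k * (1-q)^(2*n+3-k))]
      refine Finset.sum_congr rfl fun i _ => ?_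
      rw [show 2*n+3-(i+2) = 2*n+1-i by omega]
    rw [← step]
    rw [← Finset.sum_subset (Finset.Icc_subset_Icc_right (by omega : 2*n+1 ≤ 2*n+3))
      (fun x hx hx' => by
        simp only [Finset.mem_Icc] at hx hx'
        rw [Nat.choose_eq_zero_of_lt (by omega : 2*n+1 < x)]
        simp)]
    rw [Finset.mul_sum]
    refine Finset.sum_congr rfl fun k hk => ?_
    have hk' : k ≤ 2*n+1 := (Finset.mem_Icc.mp hk).2
    rw [show 2*n+3-k = (2*n+1-k)+2 by omega]; ring
  have hrest : ∑ j ∈ Finset.Icc (n+2) (2*n+1), ((2*n+1).choose j : ℝ) * q^j * (1-q)^(2*n+1-j)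
      = majP n q - ((2*n+1).choose (n+1) : ℝ) * q^(n+1) * (1-q)^n := by linarith [hM]
  rw [split, E0, E1, E2, hrest, mul_pow]
  ring


lemma supp_quarter (μ : Measure ℝ) (g : ℝ → ℝ) (hg : Measurable fun q => ENNReal.ofReal (g q)) :
    ∀ᵐ r ∂(((μ.restrict (Set.Icc 0 1)).withDensity (fun q => ENNReal.ofReal (g q))).map
        (fun q => q*(1-q))), r ∈ Set.Icc (0:ℝ) (1/4) := by
  rw [ae_iff]
  have hm : Measurable fun q : ℝ => q*(1-q) := by fun_prop
  have hs : MeasurableSet {r : ℝ | ¬ r ∈ Set.Icc (0:ℝ) (1/4)} :=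
    (measurableSet_Icc).compl
  rw [Measure.map_apply hm hs]
  have hac : ((μ.restrict (Set.Icc 0 1)).withDensity (fun q => ENNReal.ofReal (g q))) ≪
      (μ.restrict (Set.Icc 0 1)) := withDensity_absolutelyContinuous _ _
  refine hac ?_
  rw [Measure.restrict_apply (hm hs)]
  convert measure_empty
  · ext q
    simp only [Set.mem_inter_iff, Set.mem_preimage, Set.mem_setOf_eq,
      Set.mem_empty_iff_false, iff_false, not_and]
    intro hq hq01
    rw [Set.mem_Icc] at hq01
    exact hq (Set.mem_Icc.mpr ⟨by nlinarith [hq01.1, hq01.2], by nlinarith [sq_nonneg (2*q-1)]⟩)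
  · infer_instance

lemma lint_ne_top (ρ : Measure ℝ) [IsFiniteMeasure ρ]
    (hae : ∀ᵐ r ∂ρ, r ∈ Set.Icc (0:ℝ) (1/4)) (k : ℕ) :
    ∫⁻ r, (ENNReal.ofReal r)^k ∂ρ ≠ ⊤ := by
  have h : ∫⁻ r, (ENNReal.ofReal r)^k ∂ρ ≤ ∫⁻ _, 1 ∂ρ := by
    refine lintegral_mono_ae ?_
    filter_upwards [hae] with r hr
    calc (ENNReal.ofReal r)^k ≤ 1^k := by
          gcongr
          exact ENNReal.ofReal_le_one.2 (hr.2.trans (by norm_num))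
      _ = 1 := one_pow k
  refine ne_top_of_le_ne_top ?_ h
  simp [lintegral_one]

lemma choose_ratio (n : ℕ) : (n+2) * ((2*n+3).choose (n+2)) = (4*n+6) * ((2*n+1).choose (n+1)) := by
  have e1 : (2*n+3) * (2*n+2).choose (n+1) = (2*n+3).choose (n+2) * (n+2) :=
    Nat.add_one_mul_choose_eq (2*n+2) (n+1)
  have e2 : (2*n+2).choose (n+1) = (2*n+1).choose n + (2*n+1).choose (n+1) :=
    Nat.choose_succ_succ' (2*n+1) n
  have e3 : (2*n+1).choose n = (2*n+1).choose (n+1) := by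
    have h2 := Nat.choose_symm (show n+1 ≤ 2*n+1 by omega)
    rw [show 2*n+1-(n+1) = n by omega] at h2
    exact h2
  rw [e3] at e2
  calc (n+2) * ((2*n+3).choose (n+2)) = (2*n+3).choose (n+2) * (n+2) := by ring
    _ = (2*n+3) * (2*n+2).choose (n+1) := e1.symm
    _ = (2*n+3) * (2 * (2*n+1).choose (n+1)) := by rw [e2]; ring_nf
    _ = (4*n+6) * ((2*n+1).choose (n+1)) := by ring

lemma choose_le4 (n : ℕ) : ((2*n+3).choose (n+2)) ≤ 4 * ((2*n+1).choose (n+1)) := by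
  have h := choose_ratio n
  have h2 : (n+2) * ((2*n+3).choose (n+2)) ≤ (n+2) * (4 * ((2*n+1).choose (n+1))) := by
    rw [h]; nlinarith [Nat.zero_le ((2*n+1).choose (n+1))]
  exact Nat.le_of_mul_le_mul_left h2 (by omega)

lemma step_ineq (ρ ν : Measure ℝ) [IsFiniteMeasure ρ] [IsFiniteMeasure ν] (hle : ν ≤ ρ)
    (haeρ : ∀ᵐ r ∂ρ, r ∈ Set.Icc (0:ℝ) (1/4)) (haeν : ∀ᵐ r ∂ν, r ∈ Set.Icc (0:ℝ) (1/4))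
    (n : ℕ)
    (hfin : ∀ (σ : Measure ℝ) [IsFiniteMeasure σ], (∀ᵐ r ∂σ, r ∈ Set.Icc (0:ℝ) (1/4)) →
      ∀ k, ∫⁻ r, (ENNReal.ofReal r)^k ∂σ ≠ ⊤) :
    ((2*n+3).choose (n+2) : ℝ) *
      ((∫⁻ r, (ENNReal.ofReal r)^(n+2) ∂ρ).toReal - (∫⁻ r, (ENNReal.ofReal r)^(n+2) ∂ν).toReal)
    ≤ ((2*n+1).choose (n+1) : ℝ) *
      ((∫⁻ r, (ENNReal.ofReal r)^(n+1) ∂ρ).toReal - (∫⁻ r, (ENNReal.ofReal r)^(n+1) ∂ν).toReal) := by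
  set c1 : ℝ≥0∞ := (((2*n+1).choose (n+1) : ℕ) : ℝ≥0∞) with hc1
  set c2 : ℝ≥0∞ := (((2*n+3).choose (n+2) : ℕ) : ℝ≥0∞) with hc2
  set f : ℝ → ℝ≥0∞ := fun r => c1 * (ENNReal.ofReal r)^(n+1) with hf
  set g : ℝ → ℝ≥0∞ := fun r => c2 * (ENNReal.ofReal r)^(n+2) with hg
  have hmeas : ∀ k (c : ℝ≥0∞), Measurable fun r : ℝ => c * (ENNReal.ofReal r)^k := by
    intro k c
    exact (ENNReal.measurable_ofReal.pow_const k).const_mul c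
  have hc : c2 * ENNReal.ofReal (1/4) ≤ c1 := by
    have h4 : (4:ℝ≥0∞) * ENNReal.ofReal (1/4) = 1 := by
      rw [show (4:ℝ≥0∞) = ENNReal.ofReal (4:ℝ) by simp, ← ENNReal.ofReal_mul (by norm_num)]
      norm_num
    have hcc : c2 ≤ 4 * c1 := by
      rw [hc1, hc2]
      calc ((((2*n+3).choose (n+2)) : ℕ) : ℝ≥0∞) ≤ ((4 * ((2*n+1).choose (n+1)) : ℕ) : ℝ≥0∞) :=
        Nat.cast_le.2 (choose_le4 n)
        _ = 4 * (((2*n+1).choose (n+1) : ℕ) : ℝ≥0∞) := by push_cast; ring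
    calc c2 * ENNReal.ofReal (1/4) ≤ (4*c1) * ENNReal.ofReal (1/4) := by gcongr
      _ = c1 * ((4:ℝ≥0∞) * ENNReal.ofReal (1/4)) := by ring
      _ = c1 := by rw [h4, mul_one]
  have hpt : ∀ r ∈ Set.Icc (0:ℝ) (1/4), g r ≤ f r := by
    intro r hr
    have hr4 : ENNReal.ofReal r ≤ ENNReal.ofReal (1/4) := ENNReal.ofReal_le_ofReal hr.2
    calc g r = (c2 * ENNReal.ofReal r) * (ENNReal.ofReal r)^(n+1) := by rw [hg]; ring
      _ ≤ (c2 * ENNReal.ofReal (1/4)) * (ENNReal.ofReal r)^(n+1) := by gcongr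
      _ ≤ c1 * (ENNReal.ofReal r)^(n+1) := by gcongr
  -- integral facts
  have hgfρ : ∫⁻ r, g r ∂ρ ≤ ∫⁻ r, f r ∂ρ :=
    lintegral_mono_ae (by filter_upwards [haeρ] with r hr using hpt r hr)
  have hgfν : ∫⁻ r, g r ∂ν ≤ ∫⁻ r, f r ∂ν :=
    lintegral_mono_ae (by filter_upwards [haeν] with r hr using hpt r hr)
  have hfinρ2 : ∫⁻ r, g r ∂ρ ≠ ⊤ := by
    rw [hg]; simp only []
    rw [lintegral_const_mul _ (ENNReal.measurable_ofReal.pow_const (n+2))]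
    exact ENNReal.mul_ne_top (by simp [hc2]) (hfin ρ haeρ (n+2))
  have hfinν2 : ∫⁻ r, g r ∂ν ≠ ⊤ := by
    rw [hg]; simp only []
    rw [lintegral_const_mul _ (ENNReal.measurable_ofReal.pow_const (n+2))]
    exact ENNReal.mul_ne_top (by simp [hc2]) (hfin ν haeν (n+2))
  have hfinρ1 : ∫⁻ r, f r ∂ρ ≠ ⊤ := by
    rw [hf]; simp only []
    rw [lintegral_const_mul _ (ENNReal.measurable_ofReal.pow_const (n+1))]
    exact ENNReal.mul_ne_top (by simp [hc1]) (hfin ρ haeρ (n+1))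
  have hfinν1 : ∫⁻ r, f r ∂ν ≠ ⊤ := by
    rw [hf]; simp only []
    rw [lintegral_const_mul _ (ENNReal.measurable_ofReal.pow_const (n+1))]
    exact ENNReal.mul_ne_top (by simp [hc1]) (hfin ν haeν (n+1))
  have hsubν : ∫⁻ r, (f r - g r) ∂ν = ∫⁻ r, f r ∂ν - ∫⁻ r, g r ∂ν :=
    lintegral_sub (hmeas (n+2) c2) hfinν2
      (by filter_upwards [haeν] with r hr using hpt r hr)
  have hsubρ : ∫⁻ r, (f r - g r) ∂ρ = ∫⁻ r, f r ∂ρ - ∫⁻ r, g r ∂ρ :=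
    lintegral_sub (hmeas (n+2) c2) hfinρ2
      (by filter_upwards [haeρ] with r hr using hpt r hr)
  have hmono : ∫⁻ r, (f r - g r) ∂ν ≤ ∫⁻ r, (f r - g r) ∂ρ := lintegral_mono' hle le_rfl
  rw [hsubν, hsubρ] at hmono
  -- convert to reals
  have hR : (∫⁻ r, f r ∂ν).toReal - (∫⁻ r, g r ∂ν).toReal
      ≤ (∫⁻ r, f r ∂ρ).toReal - (∫⁻ r, g r ∂ρ).toReal := by
    rw [← ENNReal.toReal_sub_of_le hgfν hfinν1, ← ENNReal.toReal_sub_of_le hgfρ hfinρ1]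
    exact ENNReal.toReal_mono (by exact ENNReal.sub_ne_top hfinρ1) hmono
  have hval : ∀ (σ : Measure ℝ) (k : ℕ) (c : ℝ≥0∞) (hc' : c ≠ ⊤),
      (∫⁻ r, c * (ENNReal.ofReal r)^k ∂σ).toReal
        = c.toReal * (∫⁻ r, (ENNReal.ofReal r)^k ∂σ).toReal := by
    intro σ k c hc'
    rw [lintegral_const_mul _ (ENNReal.measurable_ofReal.pow_const k), ENNReal.toReal_mul]
  have e1 := hval ν (n+1) c1 (by simp [hc1])
  have e2 := hval ν (n+2) c2 (by simp [hc2])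
  have e3 := hval ρ (n+1) c1 (by simp [hc1])
  have e4 := hval ρ (n+2) c2 (by simp [hc2])
  rw [hf, hg] at hR
  simp only [] at hR
  rw [e1, e2, e3, e4] at hR
  have ht1 : c1.toReal = ((2*n+1).choose (n+1) : ℝ) := by simp [hc1]
  have ht2 : c2.toReal = ((2*n+3).choose (n+2) : ℝ) := by simp [hc2]
  rw [ht1, ht2] at hR
  linarith

lemma half_repr (μ' : Measure ℝ) [IsFiniteMeasure μ'] (hae : ∀ᵐ q ∂μ', q ∈ Set.Icc (0:ℝ) 1)
    (s : ℝ → ℝ) (hs : Continuous s) (n : ℕ) :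
    ∫ q, max (s q) 0 * (q*(1-q))^(n+1) ∂μ' =
      (∫⁻ r, (ENNReal.ofReal r)^(n+1)
        ∂((μ'.withDensity (fun q => ENNReal.ofReal (s q))).map (fun q => q*(1-q)))).toReal := by
  have hnn : 0 ≤ᵐ[μ'] fun q => max (s q) 0 * (q*(1-q))^(n+1) := by
    filter_upwards [hae] with q hq
    have h0 : (0:ℝ) ≤ q*(1-q) := mul_nonneg hq.1 (by linarith [hq.2])
    exact mul_nonneg (le_max_right _ _) (pow_nonneg h0 _)
  have hcont : Continuous fun q : ℝ => max (s q) 0 * (q*(1-q))^(n+1) := by fun_prop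
  rw [integral_eq_lintegral_of_nonneg_ae hnn hcont.aestronglyMeasurable]
  congr 1
  rw [lintegral_map (ENNReal.measurable_ofReal.pow_const (n+1)) (by fun_prop)]
  rw [lintegral_withDensity_eq_lintegral_mul _
    (show Measurable fun q => ENNReal.ofReal (s q) from ENNReal.measurable_ofReal.comp hs.measurable)
    (show Measurable fun a : ℝ => (ENNReal.ofReal (a*(1-a)))^(n+1) from
      (ENNReal.measurable_ofReal.comp (by fun_prop)).pow_const (n+1))]
  refine lintegral_congr_ae ?_
  filter_upwards [hae] with q hq
  have h0 : (0:ℝ) ≤ q*(1-q) := mul_nonneg hq.1 (by linarith [hq.2])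
  simp only [Pi.mul_apply, Function.comp_apply]
  rw [ENNReal.ofReal_mul (le_max_right _ _), ENNReal.ofReal_pow h0]
  have hmax : ENNReal.ofReal (max (s q) 0) = ENNReal.ofReal (s q) := by
    rcases le_total (s q) 0 with h|h
    · rw [max_eq_right h, ENNReal.ofReal_zero, Eq.comm, ENNReal.ofReal_eq_zero]
      exact h
    · rw [max_eq_left h]
  rw [hmax]

lemma voteV_diff (μ : Measure ℝ) [IsProbabilityMeasure μ] (hμ : μ (Set.Icc (0:ℝ) 1)ᶜ = 0) (n : ℕ) :
    voteV μ (n+1) - voteV μ n = ((2*n+1).choose (n+1) : ℝ) *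
      ((∫⁻ r, (ENNReal.ofReal r)^(n+1)
          ∂(((μ.restrict (Set.Icc 0 1)).withDensity (fun q => ENNReal.ofReal (2*q-1))).map (fun q => q*(1-q)))).toReal
       - (∫⁻ r, (ENNReal.ofReal r)^(n+1)
          ∂(((μ.restrict (Set.Icc 0 1)).withDensity (fun q => ENNReal.ofReal (1-2*q))).map (fun q => q*(1-q)))).toReal) := by
  have hae01 : ∀ᵐ q ∂μ, q ∈ Set.Icc (0:ℝ) 1 := by
    rw [ae_iff]; exact hμ
  have hres : μ.restrict (Set.Icc (0:ℝ) 1) = μ := Measure.restrict_eq_self_of_ae_mem hae01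
  have hcont : ∀ k, Continuous fun q : ℝ => majP k q := by
    intro k; unfold majP
    exact continuous_finset_sum _ fun j _ => by fun_prop
  have hint : ∀ k, Integrable (fun q => majP k q) μ := by
    intro k; rw [← hres]
    exact (hcont k).continuousOn.integrableOn_compact isCompact_Icc
  have h1 : voteV μ (n+1) - voteV μ n
      = ∫ q, ((2*n+1).choose (n+1) : ℝ) * ((2*q-1) * (q*(1-q))^(n+1)) ∂μ := by
    rw [voteV, voteV, ← integral_sub (hint (n+1)) (hint n)]
    refine integral_congr_ae (Filter.Eventually.of_forall fun q => ?_)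
    simp only [majP_succ]; ring
  rw [h1, integral_const_mul]
  congr 1
  have h2 : ∫ q, (2*q-1) * (q*(1-q))^(n+1) ∂μ
      = ∫ q, (2*q-1) * (q*(1-q))^(n+1) ∂(μ.restrict (Set.Icc (0:ℝ) 1)) := by rw [hres]
  rw [h2]
  have haer : ∀ᵐ q ∂(μ.restrict (Set.Icc (0:ℝ) 1)), q ∈ Set.Icc (0:ℝ) 1 :=
    ae_restrict_mem measurableSet_Icc
  have int1 : Integrable (fun q => max (2*q-1) 0 * (q*(1-q))^(n+1)) (μ.restrict (Set.Icc (0:ℝ) 1)) := by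
    exact (Continuous.continuousOn (by fun_prop)).integrableOn_compact isCompact_Icc
  have int2 : Integrable (fun q => max (1-2*q) 0 * (q*(1-q))^(n+1)) (μ.restrict (Set.Icc (0:ℝ) 1)) := by
    exact (Continuous.continuousOn (by fun_prop)).integrableOn_compact isCompact_Icc
  have hsplit : ∫ q, (2*q-1) * (q*(1-q))^(n+1) ∂(μ.restrict (Set.Icc (0:ℝ) 1))
      = (∫ q, max (2*q-1) 0 * (q*(1-q))^(n+1) ∂(μ.restrict (Set.Icc (0:ℝ) 1)))
        - ∫ q, max (1-2*q) 0 * (q*(1-q))^(n+1) ∂(μ.restrict (Set.Icc (0:ℝ) 1)) := by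
    rw [← integral_sub int1 int2]
    refine integral_congr_ae (Filter.Eventually.of_forall fun q => ?_)
    have hmax : max (2*q-1) 0 - max (1-2*q) 0 = 2*q-1 := by
      rcases le_total (2*q-1) 0 with h|h
      · rw [max_eq_right h, max_eq_left (by linarith)]; linarith
      · rw [max_eq_left h, max_eq_right (by linarith)]; linarith
    show (2*q-1) * (q*(1-q))^(n+1)
      = max (2*q-1) 0 * (q*(1-q))^(n+1) - max (1-2*q) 0 * (q*(1-q))^(n+1)
    have hd : (max (2*q-1) 0 - max (1-2*q) 0) * (q*(1-q))^(n+1)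
        = max (2*q-1) 0 * (q*(1-q))^(n+1) - max (1-2*q) 0 * (q*(1-q))^(n+1) := by ring
    rw [← hd, hmax]
  rw [hsplit]
  have e1 := half_repr (μ.restrict (Set.Icc (0:ℝ) 1)) haer (fun q => 2*q-1) (by fun_prop) n
  have e2 := half_repr (μ.restrict (Set.Icc (0:ℝ) 1)) haer (fun q => 1-2*q) (by fun_prop) n
  rw [e1, e2]


lemma sig_apply (μ : Measure ℝ) [IsFiniteMeasure μ] (B : Set ℝ) (hB : MeasurableSet B) :
    signature μ B =
      ((((μ.restrict (Set.Icc 0 1)).withDensity (fun q => ENNReal.ofReal (2*q-1))).map (fun q => q*(1-q))) B).toReal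
      - ((((μ.restrict (Set.Icc 0 1)).withDensity (fun q => ENNReal.ofReal (1-2*q))).map (fun q => q*(1-q))) B).toReal := by
  haveI h1 := aux_fin μ (fun q => 2*q-1) (by intro q hq; simp only [Set.mem_Icc] at hq; linarith [hq.2])
  haveI h2 := aux_fin μ (fun q => 1-2*q) (by intro q hq; simp only [Set.mem_Icc] at hq; linarith [hq.1])
  rw [signature]
  rw [VectorMeasure.sub_apply, Measure.toSignedMeasure_apply_measurable hB,
      Measure.toSignedMeasure_apply_measurable hB]
  rfl

/-- Shape criterion: a nonnegative signed voting signature gives a nondecreasing,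
discretely concave voting curve; a nonpositive one gives a nonincreasing, discretely
convex curve. -/
theorem stmt13 (μ : Measure ℝ) [IsProbabilityMeasure μ] (hμ : μ (Set.Icc (0:ℝ) 1)ᶜ = 0) :
    ((∀ B : Set ℝ, MeasurableSet B → 0 ≤ signature μ B) →
      (∀ n : ℕ, voteV μ n ≤ voteV μ (n+1)) ∧
      (∀ n : ℕ, voteV μ (n+2) - voteV μ (n+1) ≤ voteV μ (n+1) - voteV μ n)) ∧
    ((∀ B : Set ℝ, MeasurableSet B → signature μ B ≤ 0) →
      (∀ n : ℕ, voteV μ (n+1) ≤ voteV μ n) ∧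
      (∀ n : ℕ, voteV μ (n+1) - voteV μ n ≤ voteV μ (n+2) - voteV μ (n+1))) := by
  haveI h1 := aux_fin μ (fun q => 2*q-1) (by intro q hq; simp only [Set.mem_Icc] at hq; linarith [hq.2])
  haveI h2 := aux_fin μ (fun q => 1-2*q) (by intro q hq; simp only [Set.mem_Icc] at hq; linarith [hq.1])
  have hsuppP : ∀ᵐ r ∂(((μ.restrict (Set.Icc 0 1)).withDensity (fun q => ENNReal.ofReal (2*q-1))).map
      (fun q => q*(1-q))), r ∈ Set.Icc (0:ℝ) (1/4) := supp_quarter μ (fun q => 2*q-1) (by fun_prop)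
  have hsuppN : ∀ᵐ r ∂(((μ.restrict (Set.Icc 0 1)).withDensity (fun q => ENNReal.ofReal (1-2*q))).map
      (fun q => q*(1-q))), r ∈ Set.Icc (0:ℝ) (1/4) := supp_quarter μ (fun q => 1-2*q) (by fun_prop)
  have hfin : ∀ (σ : Measure ℝ) [IsFiniteMeasure σ], (∀ᵐ r ∂σ, r ∈ Set.Icc (0:ℝ) (1/4)) →
      ∀ k, ∫⁻ r, (ENNReal.ofReal r)^k ∂σ ≠ ⊤ := fun σ _ h k => lint_ne_top σ h k
  constructor
  · intro hyp
    have hle : (((μ.restrict (Set.Icc 0 1)).withDensity (fun q => ENNReal.ofReal (1-2*q))).map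
          (fun q => q*(1-q)))
        ≤ (((μ.restrict (Set.Icc 0 1)).withDensity (fun q => ENNReal.ofReal (2*q-1))).map
          (fun q => q*(1-q))) := by
      rw [Measure.le_iff]
      intro s hs
      have h := hyp s hs
      rw [sig_apply μ s hs] at h
      exact (ENNReal.toReal_le_toReal (measure_ne_top _ s) (measure_ne_top _ s)).mp
        (sub_nonneg.mp h)
    constructor
    · intro n
      have hd := voteV_diff μ hμ n
      have hP := ENNReal.toReal_mono (lint_ne_top _ hsuppP (n+1)) (lintegral_mono' hle le_rfl)
      have hC : (0:ℝ) ≤ ((2*n+1).choose (n+1) : ℝ) := Nat.cast_nonneg _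
      nlinarith [hd, hP]
    · intro n
      have hd1 := voteV_diff μ hμ n
      have hd2 := voteV_diff μ hμ (n+1)
      have e1 : 2*(n+1)+1 = 2*n+3 := by ring
      have e2 : (n+1)+1 = n+2 := rfl
      rw [e1, e2] at hd2
      have hs := step_ineq _ _ hle hsuppP hsuppN n hfin
      linarith
  · intro hyp
    have hle : (((μ.restrict (Set.Icc 0 1)).withDensity (fun q => ENNReal.ofReal (2*q-1))).map
          (fun q => q*(1-q)))
        ≤ (((μ.restrict (Set.Icc 0 1)).withDensity (fun q => ENNReal.ofReal (1-2*q))).map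
          (fun q => q*(1-q))) := by
      rw [Measure.le_iff]
      intro s hs
      have h := hyp s hs
      rw [sig_apply μ s hs] at h
      exact (ENNReal.toReal_le_toReal (measure_ne_top _ s) (measure_ne_top _ s)).mp
        (sub_nonneg.mp (by linarith))
    constructor
    · intro n
      have hd := voteV_diff μ hμ n
      have hP := ENNReal.toReal_mono (lint_ne_top _ hsuppN (n+1)) (lintegral_mono' hle le_rfl)
      have hC : (0:ℝ) ≤ ((2*n+1).choose (n+1) : ℝ) := Nat.cast_nonneg _
      nlinarith [hd, hP]
    · intro n
      have hd1 := voteV_diff μ hμ n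
      have hd2 := voteV_diff μ hμ (n+1)
      have e1 : 2*(n+1)+1 = 2*n+3 := by ring
      have e2 : (n+1)+1 = n+2 := rfl
      rw [e1, e2] at hd2
      have hs := step_ineq _ _ hle hsuppN hsuppP n hfin
      linarith
end

section
/- For every fixed J ≥ 1 there exist two probability measures Π₁, Π₂ on [0,1] with identical raw moments E[Q^ℓ] for ℓ = 0,…,J (hence identical distributions of C ~ Bin(J,Q)), but with E_{Π₁}[(2Q−1)(Q(1−Q))^k] ≠ E_{Π₂}[(2Q−1)(Q(1−Q))^k] for some k > ⌊(J−1)/2⌋. -/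
open MeasureTheory Polynomial

set_option maxHeartbeats 1000000

/-- Integral of a real function against a finite nonnegative combination of Dirac masses. -/
lemma stmt18_aux_integral {N : ℕ} (x : Fin N → ℝ) (w : Fin N → ℝ)
    (hw : ∀ j, 0 ≤ w j) (f : ℝ → ℝ) (hf : Measurable f) :
    ∫ q, f q ∂(∑ j : Fin N, (ENNReal.ofReal (w j)) • Measure.dirac (x j))
      = ∑ j : Fin N, w j * f (x j) := by
  rw [integral_finset_sum_measure (fun j _ => ?_)]
  · refine Finset.sum_congr rfl fun j _ => ?_
    rw [integral_smul_measure, integral_dirac]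
    simp [ENNReal.toReal_ofReal (hw j), smul_eq_mul]
  · refine Integrable.smul_measure ⟨hf.aestronglyMeasurable, ?_⟩ ENNReal.ofReal_ne_top
    simp [HasFiniteIntegral, lintegral_dirac]

lemma stmt18_aux_prob {N : ℕ} (x : Fin N → ℝ) (w : Fin N → ℝ)
    (hw : ∀ j, 0 ≤ w j) (hsum : ∑ j : Fin N, w j = 1) :
    IsProbabilityMeasure (∑ j : Fin N, (ENNReal.ofReal (w j)) • Measure.dirac (x j)) := by
  constructor
  rw [Measure.finset_sum_apply]
  have : ∀ j : Fin N, (ENNReal.ofReal (w j) • Measure.dirac (x j)) Set.univ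
      = ENNReal.ofReal (w j) := by
    intro j
    rw [Measure.smul_apply, Measure.dirac_apply_of_mem (Set.mem_univ _), smul_eq_mul, mul_one]
  rw [Finset.sum_congr rfl fun j _ => this j, ← ENNReal.ofReal_sum_of_nonneg fun j _ => hw j,
    hsum, ENNReal.ofReal_one]

lemma stmt18_aux_support {N : ℕ} (x : Fin N → ℝ) (w : Fin N → ℝ)
    (hx : ∀ j, x j ∈ Set.Icc (0:ℝ) 1) :
    (∑ j : Fin N, (ENNReal.ofReal (w j)) • Measure.dirac (x j)) (Set.Icc (0:ℝ) 1)ᶜ = 0 := by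
  rw [Measure.finset_sum_apply]
  refine Finset.sum_eq_zero fun j _ => ?_
  rw [Measure.smul_apply, Measure.dirac_apply' _ measurableSet_Icc.compl]
  simp [Set.indicator_of_notMem, hx j]

/-- Fixed-depth nonidentification: for each `J` there are two latent laws on `[0,1]`
with the same first `J` raw moments (hence the same `Bin(J,Q)` count distribution) but
different signed signature moments beyond the identified prefix. -/
theorem stmt18 (J : ℕ) (hJ : 1 ≤ J) :
    ∃ (μ₁ μ₂ : Measure ℝ), IsProbabilityMeasure μ₁ ∧ IsProbabilityMeasure μ₂ ∧
      μ₁ (Set.Icc (0:ℝ) 1)ᶜ = 0 ∧ μ₂ (Set.Icc (0:ℝ) 1)ᶜ = 0 ∧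
      (∀ ℓ : ℕ, ℓ ≤ J → ∫ q, q^ℓ ∂μ₁ = ∫ q, q^ℓ ∂μ₂) ∧
      ∃ k : ℕ, (J-1)/2 < k ∧
        ∫ q, (2*q - 1) * (q*(1-q))^k ∂μ₁ ≠ ∫ q, (2*q - 1) * (q*(1-q))^k ∂μ₂ := by
  set k : ℕ := (J+1)/2 with hk
  set N : ℕ := 2*k+2 with hN
  have hJ2k : J ≤ 2*k := by omega
  have hNR : (0:ℝ) < (N:ℝ) := by positivity
  set x : Fin N → ℝ := fun j => (j : ℝ) / (N : ℝ) with hxdef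
  have hxinj : Function.Injective x := by
    intro j j' h
    have : (j:ℝ) = (j':ℝ) := by
      simp only [hxdef] at h; rwa [div_left_inj' hNR.ne'] at h
    exact Fin.ext (by exact_mod_cast this)
  have hxmem : ∀ j, x j ∈ Set.Icc (0:ℝ) 1 := by
    intro j
    constructor
    · positivity
    · rw [div_le_one hNR]
      exact_mod_cast le_of_lt j.is_lt
  -- the signature function values and monomial values
  set w : Fin N → ℝ := fun j => (2*(x j) - 1) * ((x j)*(1-(x j)))^k with hwdef
  set vm : ℕ → (Fin N → ℝ) := fun ℓ j => (x j)^ℓ with hvmdef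
  set sp : Submodule ℝ (Fin N → ℝ) :=
    Submodule.span ℝ (Set.range (fun i : Fin (2*k+1) => vm (i:ℕ))) with hspdef
  -- degree facts for the signature polynomial
  have hA0 : (Polynomial.C (2:ℝ) * X - 1) ≠ 0 := fun h => by
    have := congrArg (eval 1) h; norm_num at this
  have hB0 : ((X : ℝ[X]) * (1 - X)) ≠ 0 := fun h => by
    have := congrArg (eval (1/2)) h; norm_num at this
  have hH0 : (Polynomial.C (2:ℝ) * X - 1) * (X * (1 - X))^k ≠ 0 :=
    mul_ne_zero hA0 (pow_ne_zero _ hB0)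
  have hHdeg : ((Polynomial.C (2:ℝ) * X - 1) * (X * (1 - X))^k).natDegree = 2*k+1 := by
    have hA : (Polynomial.C (2:ℝ) * X - 1).natDegree = 1 := by compute_degree!
    have hB : ((X : ℝ[X]) * (1 - X)).natDegree = 2 := by compute_degree!
    rw [natDegree_mul hA0 (pow_ne_zero _ hB0), natDegree_pow, hA, hB]; ring
  have hHeval : ∀ q : ℝ, ((Polynomial.C (2:ℝ) * X - 1) * (X * (1 - X))^k).eval q
      = (2*q - 1) * (q*(1-q))^k := by intro q; simp
  -- w is not in the span of the monomial value vectors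
  have hw_notin : w ∉ sp := by
    intro hmem
    rw [hspdef, Submodule.mem_span_range_iff_exists_fun] at hmem
    obtain ⟨a, ha⟩ := hmem
    set P : ℝ[X] := ((Polynomial.C (2:ℝ) * X - 1) * (X * (1 - X))^k)
      - ∑ i : Fin (2*k+1), Polynomial.C (a i) * X^(i:ℕ) with hPdef
    have heval : ∀ j : Fin N, P.eval (x j) = 0 := by
      intro j
      have hj := congrFun ha j
      simp only [Finset.sum_apply, Pi.smul_apply, smul_eq_mul, hvmdef, hwdef] at hj
      rw [hPdef]
      simp only [eval_sub, eval_finset_sum, eval_mul, eval_pow, eval_sub, eval_one, eval_X,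
        eval_C, hHeval, eval_ofNat]
      rw [sub_eq_zero, ← hj]
    have hPcoeff : P.coeff (2*k+1) ≠ 0 := by
      have hs : (∑ i : Fin (2*k+1), Polynomial.C (a i) * X^(i:ℕ)).coeff (2*k+1) = 0 := by
        rw [finset_sum_coeff]
        refine Finset.sum_eq_zero fun i _ => ?_
        rw [coeff_C_mul, coeff_X_pow, if_neg (by omega), mul_zero]
      rw [hPdef, coeff_sub, hs, sub_zero, ← hHdeg, coeff_natDegree]
      exact leadingCoeff_ne_zero.mpr hH0
    have hPdeg : P.natDegree < N := by
      have h1 : P.natDegree ≤ 2*k+1 := by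
        refine (natDegree_sub_le _ _).trans (max_le (le_of_eq hHdeg) ?_)
        refine natDegree_sum_le_of_forall_le _ _ fun i _ => ?_
        exact (natDegree_C_mul_le _ _).trans (by simp only [natDegree_X_pow]; omega)
      omega
    have := Polynomial.eq_zero_of_natDegree_lt_card_of_eval_eq_zero P hxinj heval
      (by simpa using hPdeg)
    rw [this] at hPcoeff
    simp at hPcoeff
  -- dual functional
  obtain ⟨φ, hφw, hφmap⟩ := Submodule.exists_dual_map_eq_bot_of_notMem hw_notin inferInstance
  have hφ0 : ∀ v ∈ sp, φ v = 0 := by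
    intro v hv
    have : φ v ∈ Submodule.map φ sp := Submodule.mem_map_of_mem hv
    rw [hφmap] at this
    simpa using this
  set c : Fin N → ℝ := fun j => (φ w)⁻¹ * φ (fun j' => if j = j' then 1 else 0) with hcdef
  have hc : ∀ u : Fin N → ℝ, ∑ j, c j * u j = (φ w)⁻¹ * φ u := by
    intro u
    rw [LinearMap.pi_apply_eq_sum_univ φ u, Finset.mul_sum]
    exact Finset.sum_congr rfl fun j _ => by rw [hcdef]; dsimp; ring
  have hmom : ∀ ℓ : ℕ, ℓ ≤ 2*k → ∑ j, c j * (x j)^ℓ = 0 := by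
    intro ℓ hℓ
    have hmem : vm ℓ ∈ sp := by
      rw [hspdef]
      exact Submodule.subset_span ⟨⟨ℓ, by omega⟩, rfl⟩
    have := hc (vm ℓ)
    rw [hφ0 _ hmem, mul_zero] at this
    simpa [hvmdef] using this
  have hsig : ∑ j, c j * w j = 1 := by
    rw [hc w, inv_mul_cancel₀ hφw]
  -- positive and negative parts
  set pos : Fin N → ℝ := fun j => max (c j) 0 with hposdef
  set neg : Fin N → ℝ := fun j => max (-(c j)) 0 with hnegdef
  have hpos0 : ∀ j, 0 ≤ pos j := fun j => le_max_right _ _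
  have hneg0 : ∀ j, 0 ≤ neg j := fun j => le_max_right _ _
  have hpn : ∀ j, pos j - neg j = c j := fun j => max_zero_sub_max_neg_zero_eq_self (c j)
  set S : ℝ := ∑ j, pos j with hSdef
  have hsum0 : ∑ j, c j = 0 := by
    have := hmom 0 (Nat.zero_le _)
    simpa using this
  have hSneg : ∑ j, neg j = S := by
    have : ∑ j, (pos j - neg j) = 0 := by
      rw [Finset.sum_congr rfl fun j _ => hpn j]; exact hsum0
    rw [Finset.sum_sub_distrib] at this
    linarith
  have hSpos : 0 < S := by
    rcases lt_or_eq_of_le (Finset.sum_nonneg fun j _ => hpos0 j) with h | h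
    · exact h
    · exfalso
      have hS0 : S = 0 := hSdef.trans h.symm
      have hp : ∀ j ∈ Finset.univ, pos j = 0 :=
        (Finset.sum_eq_zero_iff_of_nonneg fun j _ => hpos0 j).mp h.symm
      have hn : ∀ j ∈ Finset.univ, neg j = 0 :=
        (Finset.sum_eq_zero_iff_of_nonneg fun j _ => hneg0 j).mp (hSneg.trans hS0)
      have hczero : ∀ j, c j = 0 := fun j => by
        rw [← hpn j, hp j (Finset.mem_univ j), hn j (Finset.mem_univ j), sub_zero]
      rw [Finset.sum_eq_zero fun j _ => by rw [hczero j, zero_mul]] at hsig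
      norm_num at hsig
  -- the measures
  refine ⟨∑ j : Fin N, (ENNReal.ofReal (S⁻¹ * pos j)) • Measure.dirac (x j),
          ∑ j : Fin N, (ENNReal.ofReal (S⁻¹ * neg j)) • Measure.dirac (x j),
          ?_, ?_, ?_, ?_, ?_, ?_⟩
  · exact stmt18_aux_prob x _ (fun j => mul_nonneg (by positivity) (hpos0 j))
      (by rw [← Finset.mul_sum, ← hSdef, inv_mul_cancel₀ hSpos.ne'])
  · exact stmt18_aux_prob x _ (fun j => mul_nonneg (by positivity) (hneg0 j))
      (by rw [← Finset.mul_sum, hSneg, inv_mul_cancel₀ hSpos.ne'])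
  · exact stmt18_aux_support x _ hxmem
  · exact stmt18_aux_support x _ hxmem
  · intro ℓ hℓ
    rw [stmt18_aux_integral x _ (fun j => mul_nonneg (by positivity) (hpos0 j)) _
        (by fun_prop),
      stmt18_aux_integral x _ (fun j => mul_nonneg (by positivity) (hneg0 j)) _
        (by fun_prop)]
    rw [← sub_eq_zero, ← Finset.sum_sub_distrib]
    have : ∀ j ∈ Finset.univ, S⁻¹ * pos j * (x j)^ℓ - S⁻¹ * neg j * (x j)^ℓ
        = S⁻¹ * (c j * (x j)^ℓ) := fun j _ => by rw [← hpn j]; ring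
    rw [Finset.sum_congr rfl this, ← Finset.mul_sum, hmom ℓ (le_trans hℓ hJ2k), mul_zero]
  · refine ⟨k, by omega, ?_⟩
    rw [stmt18_aux_integral x _ (fun j => mul_nonneg (by positivity) (hpos0 j)) _
        (by fun_prop),
      stmt18_aux_integral x _ (fun j => mul_nonneg (by positivity) (hneg0 j)) _
        (by fun_prop)]
    intro heq
    rw [← sub_eq_zero, ← Finset.sum_sub_distrib] at heq
    have hrw : ∀ j ∈ Finset.univ,
        S⁻¹ * pos j * ((2*(x j) - 1) * ((x j)*(1-(x j)))^k)
          - S⁻¹ * neg j * ((2*(x j) - 1) * ((x j)*(1-(x j)))^k)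
        = S⁻¹ * (c j * w j) := fun j _ => by rw [hwdef, ← hpn j]; ring
    rw [Finset.sum_congr rfl hrw, ← Finset.mul_sum, hsig, mul_one] at heq
    exact (inv_ne_zero hSpos.ne') heq
end
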